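/- Let k be a field, Q a finite quiver without oriented cycles, and I ⊆ (kQ)_{≥2} a two-sided ideal of the path algebra kQ. Let Stab_I denote the subgroup of the group Aut(kQ/k^{Q₀}) of k^{Q₀}-algebra automorphisms of kQ consisting of those g with g(I) = I. Then the natural group homomorphism Stab_I → Aut((kQ/I)/k^{Q₀}) to the group of k^{Q₀}-algebra automorphisms of kQ/I, induced by passing to the quotient, is surjective; its kernel consists exactly of those g ∈ Stab_I such that g(a) − a ∈ I for every arrow a ∈ Q₁, and this kernel is in natural bijection with ∏_{i,j∈Q₀, i≠j} Hom_k(V_{ij}^{prim}, e_i I e_j) via g ↦ (a ↦ g(a) − a). In other words, there is a short exact sequence of groups 1 → ∏_{i≠j} Hom_k(V_{ij}^{prim}, e_i I e_j) → Stab_I → Aut((kQ/I)/k^{Q₀}) → 1. -/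

import Mathlib

/-- A finite quiver on a vertex set `V`: a family of finite types of arrows `Arrow i j`
from `i` to `j`. -/
structure FinQuiver (V : Type) where
  Arrow : V → V → Type
  [fintypeArrow : ∀ i j, Fintype (Arrow i j)]

attribute [instance] FinQuiver.fintypeArrow

/-- Paths in a finite quiver: `QPath Q i j` is the type of paths from `i` to `j`. -/
inductive QPath {V : Type} (Q : FinQuiver V) : V → V → Type
  | nil (i : V) : QPath Q i i
  | cons {i j l : V} (p : QPath Q i j) (a : Q.Arrow j l) : QPath Q i l

namespace QPath

variable {V : Type} {Q : FinQuiver V}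

/-- The length (number of arrows) of a path. -/
def length : ∀ {i j : V}, QPath Q i j → ℕ
  | _, _, nil _ => 0
  | _, _, cons p _ => length p + 1

/-- Concatenation of paths. -/
def comp : ∀ {i j l : V}, QPath Q i j → QPath Q j l → QPath Q i l
  | _, _, _, p, nil _ => p
  | _, _, _, p, cons q a => cons (comp p q) a

/-- Transport a path along equalities of its endpoints. -/
def cast {i j i' j' : V} (hi : i = i') (hj : j = j') (p : QPath Q i j) : QPath Q i' j' := by
  subst hi; subst hj; exact p

end QPath

/-- The quiver `Q` has no oriented cycles: every path from a vertex to itself has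
length zero. -/
def FinQuiver.NoCycles {V : Type} (Q : FinQuiver V) : Prop :=
  ∀ (i : V) (p : QPath Q i i), p.length = 0

/-- A realization of the `k`-algebra `A` as the path algebra of the quiver `Q`:
a `k`-basis indexed by the paths of `Q`, such that basis vectors multiply by
concatenation of composable paths (and give `0` for non-composable paths), and such
that the sum of the length-zero paths is `1`.  The basis vector of a path lying in
`e_i (kQ) e_j` is indexed by the corresponding path from `j` to `i`. -/
structure PathAlgStructure (k : Type) [CommRing k] {V : Type} [Fintype V] [DecidableEq V]
    (Q : FinQuiver V) (A : Type) [Ring A] [Algebra k A] where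
  basis : Module.Basis (Σ i : V, Σ j : V, QPath Q i j) k A
  basis_mul : ∀ {a b c d : V} (p : QPath Q a b) (q : QPath Q c d),
    basis ⟨c, d, q⟩ * basis ⟨a, b, p⟩ =
      if h : b = c then basis ⟨a, d, p.comp (q.cast h.symm rfl)⟩ else 0
  one_def : (1 : A) = ∑ i : V, basis ⟨i, i, QPath.nil i⟩

namespace PathAlgStructure

variable {k : Type} [CommRing k] {V : Type} [Fintype V] [DecidableEq V]
  {Q : FinQuiver V} {A : Type} [Ring A] [Algebra k A]

/-- The idempotent `e_i` of the path algebra: the length-zero path at the vertex `i`. -/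
noncomputable def idem (ps : PathAlgStructure k Q A) (i : V) : A :=
  ps.basis ⟨i, i, QPath.nil i⟩

/-- `(kQ)_{≥ n}`: the span of the paths of length at least `n`. -/
def degreeGE (ps : PathAlgStructure k Q A) (n : ℕ) : Submodule k A :=
  Submodule.span k {x | ∃ (i j : V) (p : QPath Q i j), n ≤ p.length ∧ x = ps.basis ⟨i, j, p⟩}

/-- `e_i (kQ) e_j`: the span of the paths from `j` to `i`. -/
def pathSpan (ps : PathAlgStructure k Q A) (i j : V) : Submodule k A :=
  Submodule.span k {x | ∃ p : QPath Q j i, x = ps.basis ⟨j, i, p⟩}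

/-- `V_{ij}^{prim}`: the span of the arrows from `j` to `i`. -/
def arrowSpan (ps : PathAlgStructure k Q A) (i j : V) : Submodule k A :=
  Submodule.span k {x | ∃ a : Q.Arrow j i, x = ps.basis ⟨j, i, (QPath.nil j).cons a⟩}

/-- `V_{ij}^{nonprim} = e_i (kQ)_{≥2} e_j`: the span of the paths from `j` to `i`
of length at least two. -/
def nonprimSpan (ps : PathAlgStructure k Q A) (i j : V) : Submodule k A :=
  Submodule.span k {x | ∃ p : QPath Q j i, 2 ≤ p.length ∧ x = ps.basis ⟨j, i, p⟩}

end PathAlgStructure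


namespace QPath

variable {V : Type} {Q : FinQuiver V}

@[simp] theorem cast_eq {i j : V} (hi : i = i) (hj : j = j) (p : QPath Q i j) :
    p.cast hi hj = p := rfl

@[simp] theorem comp_nil {i j : V} (p : QPath Q i j) : p.comp (nil j) = p := by
  simp [comp]

@[simp] theorem comp_cons {i j l m : V} (p : QPath Q i j) (q : QPath Q j l) (a : Q.Arrow l m) :
    p.comp (q.cons a) = (p.comp q).cons a := by simp [comp]

@[simp] theorem nil_comp : ∀ {i j : V} (p : QPath Q i j), (nil i).comp p = p
  | _, _, nil _ => by simp
  | _, _, cons p a => by rw [comp_cons, nil_comp]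

@[simp] theorem length_comp : ∀ {i j l : V} (p : QPath Q i j) (q : QPath Q j l),
    (p.comp q).length = p.length + q.length
  | _, _, _, p, nil _ => by simp [length]
  | _, _, _, p, cons q a => by rw [comp_cons, length, length, length_comp, Nat.add_assoc]


@[simp] theorem length_cast {i j i' j' : V} (hi : i = i') (hj : j = j') (p : QPath Q i j) :
    (p.cast hi hj).length = p.length := by subst hi; subst hj; rfl

/-- The list of visited vertices, most recent first. -/
def verts : ∀ {i j : V}, QPath Q i j → List V
  | _, j, nil _ => [j]
  | _, l, cons p _ => l :: verts p

@[simp] theorem verts_length : ∀ {i j : V} (p : QPath Q i j), (verts p).length = p.length + 1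
  | _, _, nil _ => by simp [verts, length]
  | _, _, cons p a => by simp [verts, length, verts_length p]

theorem nonempty_of_mem_verts : ∀ {i j : V} (p : QPath Q i j) (v : V),
    v ∈ verts p → Nonempty (QPath Q v j)
  | _, _, nil _, v, hv => by
    rw [verts, List.mem_singleton] at hv; exact ⟨QPath.cast rfl hv (QPath.nil v)⟩
  | _, _, cons p a, v, hv => by
    rw [verts, List.mem_cons] at hv
    rcases hv with hv | hv
    · exact ⟨hv ▸ nil _⟩
    · exact ⟨(nonempty_of_mem_verts p v hv).some.cons a⟩

theorem verts_nodup (hQ : Q.NoCycles) : ∀ {i j : V} (p : QPath Q i j), (verts p).Nodup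
  | _, _, nil _ => by simp [verts]
  | _, _, cons p a => by
    rw [verts, List.nodup_cons]
    refine ⟨fun hl => ?_, verts_nodup hQ p⟩
    obtain ⟨q⟩ := nonempty_of_mem_verts p _ hl
    have := hQ _ (q.cons a)
    simp [length] at this

theorem length_lt_card [Fintype V] (hQ : Q.NoCycles) {i j : V} (p : QPath Q i j) :
    p.length + 1 ≤ Fintype.card V := by
  have := (verts_nodup hQ p).length_le_card
  rwa [verts_length] at this


@[simp] theorem length_nil (i : V) : (nil (Q := Q) i).length = 0 := by simp [length]

@[simp] theorem length_cons {i j l : V} (p : QPath Q i j) (a : Q.Arrow j l) :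
    (p.cons a).length = p.length + 1 := by simp [length]


end QPath


theorem FinQuiver.arrow_ne {V : Type} {Q : FinQuiver V} (hQ : Q.NoCycles) {i j : V}
    (a : Q.Arrow i j) : j ≠ i := by
  intro h
  subst h
  have := hQ j ((QPath.nil j).cons a)
  simp [QPath.length] at this

namespace PathAlgStructure

variable {k : Type} [CommRing k] {V : Type} [Fintype V] [DecidableEq V]
  {Q : FinQuiver V} {A : Type} [Ring A] [Algebra k A]

variable (ps : PathAlgStructure k Q A)


theorem idem_mul_basis {i j : V} (p : QPath Q i j) (l : V) :
    ps.idem l * ps.basis ⟨i, j, p⟩ = if l = j then ps.basis ⟨i, j, p⟩ else 0 := by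
  rw [idem, ps.basis_mul]
  by_cases h : l = j
  · subst h; rw [dif_pos rfl, if_pos rfl, QPath.cast_eq, QPath.comp_nil]
  · rw [dif_neg (Ne.symm h), if_neg h]

theorem basis_mul_idem {i j : V} (p : QPath Q i j) (l : V) :
    ps.basis ⟨i, j, p⟩ * ps.idem l = if l = i then ps.basis ⟨i, j, p⟩ else 0 := by
  rw [idem, ps.basis_mul]
  by_cases h : l = i
  · subst h; rw [dif_pos rfl, if_pos rfl, QPath.cast_eq, QPath.nil_comp]
  · rw [dif_neg h, if_neg h]

@[simp] theorem idem_mul_basis_same {i j : V} (p : QPath Q i j) :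
    ps.idem j * ps.basis ⟨i, j, p⟩ = ps.basis ⟨i, j, p⟩ := by simp [idem_mul_basis]

@[simp] theorem basis_mul_idem_same {i j : V} (p : QPath Q i j) :
    ps.basis ⟨i, j, p⟩ * ps.idem i = ps.basis ⟨i, j, p⟩ := by simp [basis_mul_idem]

theorem idem_mul_basis_ne {i j : V} (p : QPath Q i j) {l : V} (h : l ≠ j) :
    ps.idem l * ps.basis ⟨i, j, p⟩ = 0 := by simp [idem_mul_basis, h]

theorem basis_mul_idem_ne {i j : V} (p : QPath Q i j) {l : V} (h : l ≠ i) :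
    ps.basis ⟨i, j, p⟩ * ps.idem l = 0 := by simp [basis_mul_idem, h]

theorem idem_mul_idem (i j : V) :
    ps.idem i * ps.idem j = if i = j then ps.idem i else 0 := by
  show ps.idem i * ps.basis ⟨j, j, QPath.nil j⟩ = _
  rw [idem_mul_basis]
  split_ifs with h
  · rw [h]; rfl
  · rfl

theorem basis_cons {i j l : V} (p : QPath Q i j) (a : Q.Arrow j l) :
    ps.basis ⟨i, l, p.cons a⟩ =
      ps.basis ⟨j, l, (QPath.nil j).cons a⟩ * ps.basis ⟨i, j, p⟩ := by
  rw [ps.basis_mul, dif_pos rfl, QPath.cast_eq, QPath.comp_cons, QPath.comp_nil]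



theorem basis_mem_degreeGE {n : ℕ} {i j : V} (p : QPath Q i j) (h : n ≤ p.length) :
    ps.basis ⟨i, j, p⟩ ∈ ps.degreeGE n :=
  Submodule.subset_span ⟨i, j, p, h, rfl⟩

theorem degreeGE_antitone {m n : ℕ} (h : m ≤ n) : ps.degreeGE n ≤ ps.degreeGE m :=
  Submodule.span_mono (fun _ ⟨i, j, p, hp, hx⟩ => ⟨i, j, p, h.trans hp, hx⟩)

theorem degreeGE_zero : ps.degreeGE 0 = ⊤ := by
  rw [eq_top_iff, ← ps.basis.span_eq]
  refine Submodule.span_mono ?_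
  rintro x ⟨⟨i, j, p⟩, rfl⟩
  exact ⟨i, j, p, Nat.zero_le _, rfl⟩

theorem degreeGE_card (hQ : Q.NoCycles) : ps.degreeGE (Fintype.card V) = ⊥ := by
  rw [degreeGE]
  convert Submodule.span_empty
  rw [Set.eq_empty_iff_forall_notMem]
  rintro x ⟨i, j, p, hp, rfl⟩
  have := QPath.length_lt_card hQ p
  omega

theorem mul_mem_degreeGE {m n : ℕ} {x y : A} (hx : x ∈ ps.degreeGE m)
    (hy : y ∈ ps.degreeGE n) : x * y ∈ ps.degreeGE (m + n) := by
  induction hx using Submodule.span_induction with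
  | mem x hx =>
    induction hy using Submodule.span_induction with
    | mem y hy =>
      obtain ⟨i, j, p, hp, rfl⟩ := hx
      obtain ⟨c, d, q, hq, rfl⟩ := hy
      rw [ps.basis_mul]
      split_ifs with h
      · refine ps.basis_mem_degreeGE _ ?_
        rw [QPath.length_comp, QPath.length_cast]
        omega
      · exact zero_mem _
    | zero => rw [mul_zero]; exact zero_mem _
    | add y z _ _ hy hz => rw [mul_add]; exact add_mem hy hz
    | smul c y _ hy => rw [mul_smul_comm]; exact Submodule.smul_mem _ c hy
  | zero => rw [zero_mul]; exact zero_mem _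
  | add x y _ _ hx' hy' => rw [add_mul]; exact add_mem hx' hy'
  | smul c x _ hx' => rw [smul_mul_assoc]; exact Submodule.smul_mem _ c hx'

theorem idem_mul_of_mem_pathSpan {i j : V} {x : A} (h : x ∈ ps.pathSpan i j) :
    ps.idem i * x = x := by
  induction h using Submodule.span_induction with
  | mem x hx => obtain ⟨p, rfl⟩ := hx; exact ps.idem_mul_basis_same p
  | zero => rw [mul_zero]
  | add y z _ _ hy hz => rw [mul_add, hy, hz]
  | smul c y _ hy => rw [mul_smul_comm, hy]

theorem mul_idem_of_mem_pathSpan {i j : V} {x : A} (h : x ∈ ps.pathSpan i j) :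
    x * ps.idem j = x := by
  induction h using Submodule.span_induction with
  | mem x hx => obtain ⟨p, rfl⟩ := hx; exact ps.basis_mul_idem_same p
  | zero => rw [zero_mul]
  | add y z _ _ hy hz => rw [add_mul, hy, hz]
  | smul c y _ hy => rw [smul_mul_assoc, hy]

theorem idem_mul_mul_idem_mem_pathSpan (i j : V) (x : A) :
    ps.idem i * x * ps.idem j ∈ ps.pathSpan i j := by
  have hx : x ∈ Submodule.span k (Set.range ps.basis) := by
    rw [ps.basis.span_eq]; trivial
  induction hx using Submodule.span_induction with
  | mem x hx =>
    obtain ⟨⟨a, b, q⟩, rfl⟩ := hx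
    rw [idem_mul_basis]
    split_ifs with h
    · rw [basis_mul_idem]
      split_ifs with h'
      · subst h; subst h'; exact Submodule.subset_span ⟨q, rfl⟩
      · exact zero_mem _
    · rw [zero_mul]; exact zero_mem _
  | zero => rw [mul_zero, zero_mul]; exact zero_mem _
  | add y z _ _ hy hz => rw [mul_add, add_mul]; exact add_mem hy hz
  | smul c y _ hy => rw [mul_smul_comm, smul_mul_assoc]; exact Submodule.smul_mem _ c hy

theorem arrowSpan_le_pathSpan (i j : V) : ps.arrowSpan i j ≤ ps.pathSpan i j :=
  Submodule.span_mono (fun _ ⟨a, hx⟩ => ⟨_, hx⟩)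


variable (F : ∀ i j : V, Q.Arrow i j → A)


/-- The multiplicative extension of `F` on paths. -/
noncomputable def pimg : ∀ {i j : V}, QPath Q i j → A
  | i, _, QPath.nil _ => ps.idem i
  | _, _, QPath.cons p a => F _ _ a * pimg p

@[simp] theorem pimg_nil (i : V) : ps.pimg F (QPath.nil i) = ps.idem i := by simp [pimg]

@[simp] theorem pimg_cons {i j l : V} (p : QPath Q i j) (a : Q.Arrow j l) :
    ps.pimg F (p.cons a) = F j l a * ps.pimg F p := by simp [pimg]

/-- Block condition for arrow images: `F i j a ∈ e_j A e_i`. -/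
def IsBlock : Prop :=
  ∀ (i j : V) (a : Q.Arrow i j), ps.idem j * F i j a = F i j a ∧ F i j a * ps.idem i = F i j a

variable {ps F}

theorem IsBlock.idem_mul_ne (hF : ps.IsBlock F) {i j : V} (a : Q.Arrow i j) {l : V}
    (h : l ≠ j) : ps.idem l * F i j a = 0 := by
  rw [← (hF i j a).1, ← mul_assoc, ps.idem_mul_idem, if_neg h, zero_mul]

theorem IsBlock.mul_idem_ne (hF : ps.IsBlock F) {i j : V} (a : Q.Arrow i j) {l : V}
    (h : l ≠ i) : F i j a * ps.idem l = 0 := by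
  rw [← (hF i j a).2, mul_assoc, ps.idem_mul_idem, if_neg (fun hh => h hh.symm), mul_zero]

theorem IsBlock.idem_mul_pimg (hF : ps.IsBlock F) {i j : V} (p : QPath Q i j) (l : V) :
    ps.idem l * ps.pimg F p = if l = j then ps.pimg F p else 0 := by
  induction p with
  | nil =>
    rw [pimg_nil, ps.idem_mul_idem]
    split_ifs with h
    · rw [h]
    · rfl
  | cons p a ih =>
    rw [pimg_cons, ← mul_assoc]
    split_ifs with h
    · subst h; rw [(hF _ _ a).1]
    · rw [hF.idem_mul_ne a h, zero_mul]

theorem IsBlock.pimg_mul_idem (hF : ps.IsBlock F) : ∀ {i j : V} (p : QPath Q i j) (l : V),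
    ps.pimg F p * ps.idem l = if l = i then ps.pimg F p else 0
  | m, _, QPath.nil _, l => by
    rw [pimg_nil, ps.idem_mul_idem]
    by_cases h : l = m
    · rw [if_pos h.symm, if_pos h]
    · rw [if_neg (fun hh => h hh.symm), if_neg h]
  | _, _, QPath.cons p a, l => by
    rw [pimg_cons, mul_assoc, hF.pimg_mul_idem p l]
    split_ifs with h
    · rfl
    · rw [mul_zero]

theorem IsBlock.pimg_comp (hF : ps.IsBlock F) {i j l : V} (p : QPath Q i j) (q : QPath Q j l) :
    ps.pimg F (p.comp q) = ps.pimg F q * ps.pimg F p := by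
  induction q with
  | nil => rw [QPath.comp_nil, pimg_nil, hF.idem_mul_pimg, if_pos rfl]
  | cons q a ih => rw [QPath.comp_cons, pimg_cons, pimg_cons, ih, mul_assoc]

variable (ps F) in
/-- The linear extension of `pimg`. -/
noncomputable def liftL : A →ₗ[k] A :=
  ps.basis.constr k (fun s => ps.pimg F s.2.2)

@[simp] theorem liftL_basis (s : Σ i : V, Σ j : V, QPath Q i j) :
    ps.liftL F (ps.basis s) = ps.pimg F s.2.2 :=
  ps.basis.constr_basis k _ s

theorem liftL_one : ps.liftL F (1 : A) = 1 := by
  rw [ps.one_def, map_sum]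
  refine Finset.sum_congr rfl fun i _ => ?_
  rw [liftL_basis]
  exact ps.pimg_nil F i

theorem IsBlock.liftL_mul (hF : ps.IsBlock F) (x y : A) :
    ps.liftL F (x * y) = ps.liftL F x * ps.liftL F y := by
  have key : ((LinearMap.mul k A).compr₂ (ps.liftL F)) =
      ((LinearMap.mul k A).compl₁₂ (ps.liftL F) (ps.liftL F)) := by
    refine ps.basis.ext fun s => ?_
    refine ps.basis.ext fun t => ?_
    obtain ⟨a₁, b₁, p₁⟩ := s
    obtain ⟨a₂, b₂, p₂⟩ := t
    simp only [LinearMap.compr₂_apply, LinearMap.compl₁₂_apply, LinearMap.mul_apply',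
      liftL_basis]
    rw [ps.basis_mul]
    split_ifs with h
    · subst h
      rw [QPath.cast_eq, liftL_basis]
      exact hF.pimg_comp p₂ p₁
    · rw [map_zero]
      have e1 : ps.pimg F p₁ = ps.pimg F p₁ * ps.idem a₁ := by
        rw [hF.pimg_mul_idem, if_pos rfl]
      have e2 : ps.pimg F p₂ = ps.idem b₂ * ps.pimg F p₂ := by
        rw [hF.idem_mul_pimg, if_pos rfl]
      rw [e1, e2, mul_assoc, ← mul_assoc (ps.idem a₁), ps.idem_mul_idem,
        if_neg (fun hh => h hh.symm), zero_mul, mul_zero]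
  exact DFunLike.congr_fun (DFunLike.congr_fun key x) y

variable (ps F) in
/-- The algebra endomorphism extending arrow images `F`. -/
noncomputable def liftHom (hF : ps.IsBlock F) : A →ₐ[k] A :=
  AlgHom.ofLinearMap (ps.liftL F) liftL_one hF.liftL_mul

@[simp] theorem liftHom_basis (hF : ps.IsBlock F) (s : Σ i : V, Σ j : V, QPath Q i j) :
    ps.liftHom F hF (ps.basis s) = ps.pimg F s.2.2 :=
  liftL_basis s

theorem liftHom_idem (hF : ps.IsBlock F) (i : V) :
    ps.liftHom F hF (ps.idem i) = ps.idem i := by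
  rw [show ps.idem i = ps.basis ⟨i, i, QPath.nil i⟩ from rfl, liftHom_basis]
  exact ps.pimg_nil F i

theorem liftHom_arrow (hF : ps.IsBlock F) {i j : V} (a : Q.Arrow i j) :
    ps.liftHom F hF (ps.basis ⟨i, j, (QPath.nil i).cons a⟩) = F i j a := by
  rw [liftHom_basis, pimg_cons, pimg_nil, (hF i j a).2]

/-- Two algebra maps out of the path algebra agreeing on idempotents and arrows agree. -/
theorem algHom_ext {B : Type} [Ring B] [Algebra k B] {f₁ f₂ : A →ₐ[k] B}
    (he : ∀ i : V, f₁ (ps.idem i) = f₂ (ps.idem i))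
    (ha : ∀ (i j : V) (a : Q.Arrow i j),
      f₁ (ps.basis ⟨i, j, (QPath.nil i).cons a⟩) = f₂ (ps.basis ⟨i, j, (QPath.nil i).cons a⟩))
    (x : A) : f₁ x = f₂ x := by
  have key : ∀ (s : Σ i : V, Σ j : V, QPath Q i j), f₁ (ps.basis s) = f₂ (ps.basis s) := by
    rintro ⟨i, j, p⟩
    induction p with
    | nil => exact he _
    | cons p a ih => rw [ps.basis_cons, map_mul, map_mul, ih, ha]
  have h2 : f₁.toLinearMap = f₂.toLinearMap := ps.basis.ext key
  exact DFunLike.congr_fun h2 x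



theorem bijective_of_arrow_diff (hQ : Q.NoCycles) (g : A →ₐ[k] A)
    (he : ∀ i : V, g (ps.idem i) = ps.idem i)
    (ha : ∀ (i j : V) (a : Q.Arrow i j),
      g (ps.basis ⟨i, j, (QPath.nil i).cons a⟩) - ps.basis ⟨i, j, (QPath.nil i).cons a⟩
        ∈ ps.degreeGE 2) :
    Function.Bijective g := by
  have step1 : ∀ {i j : V} (p : QPath Q i j),
      g (ps.basis ⟨i, j, p⟩) - ps.basis ⟨i, j, p⟩ ∈ ps.degreeGE (p.length + 1) := by
    intro i j p
    induction p with
    | nil =>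
      rw [show ps.basis ⟨_, _, QPath.nil _⟩ = ps.idem _ from rfl, he, sub_self]
      exact zero_mem _
    | cons p a ih =>
      have hBa : ps.basis ⟨_, _, (QPath.nil _).cons a⟩ ∈ ps.degreeGE 1 :=
        ps.basis_mem_degreeGE _ (by rw [QPath.length_cons, QPath.length_nil])
      have hga : g (ps.basis ⟨_, _, (QPath.nil _).cons a⟩) ∈ ps.degreeGE 1 := by
        have : g (ps.basis ⟨_, _, (QPath.nil _).cons a⟩) =
            ps.basis ⟨_, _, (QPath.nil _).cons a⟩ +
            (g (ps.basis ⟨_, _, (QPath.nil _).cons a⟩) - ps.basis ⟨_, _, (QPath.nil _).cons a⟩)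
          := by abel
        rw [this]
        exact add_mem hBa (ps.degreeGE_antitone (by omega) (ha _ _ a))
      have t1 := ps.mul_mem_degreeGE hga ih
      have t2 := ps.mul_mem_degreeGE (ha _ _ a) (ps.basis_mem_degreeGE p le_rfl)
      have key : g (ps.basis ⟨_, _, p.cons a⟩) - ps.basis ⟨_, _, p.cons a⟩ =
          g (ps.basis ⟨_, _, (QPath.nil _).cons a⟩) * (g (ps.basis ⟨_, _, p⟩) - ps.basis ⟨_, _, p⟩)
          + (g (ps.basis ⟨_, _, (QPath.nil _).cons a⟩) - ps.basis ⟨_, _, (QPath.nil _).cons a⟩)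
            * ps.basis ⟨_, _, p⟩ := by
        rw [ps.basis_cons, map_mul]
        noncomm_ring
      rw [key, QPath.length_cons]
      have e1 : 1 + (p.length + 1) = p.length + 1 + 1 := by omega
      have e2 : 2 + p.length = p.length + 1 + 1 := by omega
      rw [e1] at t1
      rw [e2] at t2
      exact add_mem t1 t2
  have step2 : ∀ (n : ℕ) (x : A), x ∈ ps.degreeGE n → g x - x ∈ ps.degreeGE (n + 1) := by
    intro n x hx
    induction hx using Submodule.span_induction with
    | mem x hx =>
      obtain ⟨i, j, p, hp, rfl⟩ := hx
      exact ps.degreeGE_antitone (by omega) (step1 p)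
    | zero => rw [map_zero, sub_zero]; exact zero_mem _
    | add y z _ _ hy hz =>
      have : g (y + z) - (y + z) = (g y - y) + (g z - z) := by rw [map_add]; abel
      rw [this]; exact add_mem hy hz
    | smul c y _ hy =>
      have : g (c • y) - c • y = c • (g y - y) := by rw [map_smul, smul_sub]
      rw [this]; exact Submodule.smul_mem _ c hy
  set D : Module.End k A := g.toLinearMap - LinearMap.id with hD
  have step3 : ∀ (n : ℕ) (x : A), (D ^ n) x ∈ ps.degreeGE n := by
    intro n
    induction n with
    | zero => intro x; rw [pow_zero]; rw [ps.degreeGE_zero]; trivial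
    | succ n ih =>
      intro x
      rw [pow_succ']
      have : (D * D ^ n) x = g ((D ^ n) x) - (D ^ n) x := by
        simp [hD, Module.End.mul_apply, LinearMap.sub_apply]
      rw [this]
      exact step2 n _ (ih x)
  have step4 : D ^ (Fintype.card V) = 0 := by
    ext x
    have := step3 (Fintype.card V) x
    rw [ps.degreeGE_card hQ] at this
    simpa using this
  have unit : IsUnit ((1 : Module.End k A) + D) :=
    IsNilpotent.isUnit_add_left_of_commute ⟨_, step4⟩ isUnit_one (Commute.one_right D)
  have hgD : (1 : Module.End k A) + D = g.toLinearMap := by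
    rw [hD, show (1 : Module.End k A) = LinearMap.id from rfl]; abel
  rw [hgD] at unit
  exact (Module.End.isUnit_iff _).mp unit

theorem map_eq_self {I : Submodule k A} (g : A ≃ₐ[k] A) (h : ∀ x : A, g x ∈ I ↔ x ∈ I) :
    Submodule.map g.toLinearMap I = I := by
  ext y
  rw [Submodule.mem_map]
  constructor
  · rintro ⟨x, hx, rfl⟩
    exact (h x).2 hx
  · intro hy
    refine ⟨g.symm y, ?_, g.apply_symm_apply y⟩
    have := (h (g.symm y)).1
    rw [g.apply_symm_apply] at this
    exact this hy


end PathAlgStructure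

set_option maxHeartbeats 1000000

/-- For a finite quiver `Q` without oriented cycles and a two-sided ideal
`I ⊆ (kQ)_{≥2}`, with the quotient `kQ/I` presented by a surjective `k`-algebra map
`p : kQ → B` with kernel `I`:

1. the natural map from `Stab_I ⊆ Aut(kQ/k^{Q₀})` (the `k^{Q₀}`-algebra automorphisms `g`
   of `kQ` with `g(I) = I`) to `Aut((kQ/I)/k^{Q₀})` is surjective: every `k^{Q₀}`-algebra
   automorphism of `kQ/I` lifts;
2. its kernel consists exactly of the `g ∈ Stab_I` with `g(a) − a ∈ I` for every arrow `a`;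
3. every `g` in this kernel satisfies `g(v) − v ∈ e_i I e_j` for `v ∈ V_{ij}^{prim}`, and the
   map `g ↦ (v ↦ g(v) − v)` is a bijection from the kernel onto
   `∏_{i≠j} Hom_k(V_{ij}^{prim}, e_i I e_j)`.

Together these express the short exact sequence
`1 → ∏ Hom(V_{ij}^{prim}, e_i I e_j) → Stab_I → Aut((kQ/I)/k^{Q₀}) → 1`. -/
theorem stabilizer_exact_sequence (k : Type) [Field k]
    (V : Type) [Fintype V] [DecidableEq V] (Q : FinQuiver V)
    (A : Type) [Ring A] [Algebra k A] (ps : PathAlgStructure k Q A)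
    (hQ : Q.NoCycles)
    (I : Submodule k A)
    (hI : ∀ a : A, ∀ x ∈ I, a * x ∈ I ∧ x * a ∈ I)
    (hIle : I ≤ ps.degreeGE 2)
    (B : Type) [Ring B] [Algebra k B] (p : A →ₐ[k] B)
    (hp : Function.Surjective p) (hker : ∀ x : A, p x = 0 ↔ x ∈ I) :
    -- (1) surjectivity onto the automorphisms of the quotient
    (∀ h : B ≃ₐ[k] B, (∀ i : V, h (p (ps.idem i)) = p (ps.idem i)) →
      ∃ g : A ≃ₐ[k] A, (∀ i : V, g (ps.idem i) = ps.idem i) ∧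
        Submodule.map g.toLinearMap I = I ∧ ∀ x : A, p (g x) = h (p x)) ∧
    -- (2) characterization of the kernel
    (∀ g : A ≃ₐ[k] A, (∀ i : V, g (ps.idem i) = ps.idem i) →
      Submodule.map g.toLinearMap I = I →
      ((∀ x : A, p (g x) = p x) ↔
        ∀ (i j : V) (a : Q.Arrow i j),
          g (ps.basis ⟨i, j, (QPath.nil i).cons a⟩) - ps.basis ⟨i, j, (QPath.nil i).cons a⟩ ∈ I)) ∧
    -- (3a) elements of the kernel move arrows by elements of `e_i I e_j`
    (∀ g : A ≃ₐ[k] A, (∀ i : V, g (ps.idem i) = ps.idem i) →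
      Submodule.map g.toLinearMap I = I → (∀ x : A, p (g x) = p x) →
      ∀ (q : {q : V × V // q.1 ≠ q.2}) (v : ps.arrowSpan q.1.1 q.1.2),
        g (v : A) - (v : A) ∈ I ⊓ ps.pathSpan q.1.1 q.1.2) ∧
    -- (3b) the kernel is in bijection with `∏_{i≠j} Hom(V_{ij}^{prim}, e_i I e_j)`
    (∀ φ : ∀ q : {q : V × V // q.1 ≠ q.2},
        (↥(ps.arrowSpan q.1.1 q.1.2) →ₗ[k] ↥(I ⊓ ps.pathSpan q.1.1 q.1.2)),
      ∃! g : A ≃ₐ[k] A, (∀ i : V, g (ps.idem i) = ps.idem i) ∧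
        Submodule.map g.toLinearMap I = I ∧ (∀ x : A, p (g x) = p x) ∧
        ∀ (q : {q : V × V // q.1 ≠ q.2}) (v : ps.arrowSpan q.1.1 q.1.2),
          g (v : A) - (v : A) = (φ q v : A)) := by
  -- a general lifting construction for automorphisms of `B` fixing the idempotents
  have lift : ∀ h' : B ≃ₐ[k] B, (∀ i : V, h' (p (ps.idem i)) = p (ps.idem i)) →
      ∃ G : A →ₐ[k] A, (∀ i : V, G (ps.idem i) = ps.idem i) ∧ ∀ x : A, p (G x) = h' (p x) := by
    intro h' hfix'
    choose lif hlif using hp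
    set F : ∀ i j : V, Q.Arrow i j → A := fun i j a =>
      ps.idem j * lif (h' (p (ps.basis ⟨i, j, (QPath.nil i).cons a⟩))) * ps.idem i with hFdef
    have hF : ps.IsBlock F := by
      intro i j a
      constructor
      · rw [hFdef, ← mul_assoc, ← mul_assoc, ps.idem_mul_idem, if_pos rfl]
      · rw [hFdef, mul_assoc, ps.idem_mul_idem, if_pos rfl]
    have hpF : ∀ (i j : V) (a : Q.Arrow i j),
        p (F i j a) = h' (p (ps.basis ⟨i, j, (QPath.nil i).cons a⟩)) := by
      intro i j a
      rw [hFdef]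
      dsimp only
      rw [map_mul, map_mul, hlif, ← hfix' j, ← hfix' i, ← map_mul, ← map_mul,
        ← map_mul, ← map_mul, ps.idem_mul_basis_same, ps.basis_mul_idem_same]
    refine ⟨ps.liftHom F hF, ps.liftHom_idem hF, ?_⟩
    intro x
    exact ps.algHom_ext (f₁ := p.comp (ps.liftHom F hF)) (f₂ := (h' : B →ₐ[k] B).comp p)
      (fun i => by
        show p (ps.liftHom F hF (ps.idem i)) = h' (p (ps.idem i))
        rw [ps.liftHom_idem hF, hfix' i])
      (fun i j a => by
        show p (ps.liftHom F hF _) = h' (p _)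
        rw [ps.liftHom_arrow hF a, hpF i j a]) x
  refine ⟨?_, ?_, ?_, ?_⟩
  · -- (1) surjectivity
    intro h hfix
    obtain ⟨G, hGe, hGp⟩ := lift h hfix
    obtain ⟨G', hG'e, hG'p⟩ := lift h.symm (fun i => by rw [← hfix i, h.symm_apply_apply, hfix i])
    have hcomp1 : ∀ x : A, p ((G'.comp G) x) = p x := fun x => by
      rw [AlgHom.comp_apply, hG'p, hGp, h.symm_apply_apply]
    have hcomp2 : ∀ x : A, p ((G.comp G') x) = p x := fun x => by
      rw [AlgHom.comp_apply, hGp, hG'p, h.apply_symm_apply]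
    have b1 : Function.Bijective (G'.comp G) := by
      refine ps.bijective_of_arrow_diff hQ _ (fun i => by
        rw [AlgHom.comp_apply, hGe, hG'e]) (fun i j a => ?_)
      exact hIle ((hker _).1 (by rw [map_sub, hcomp1, sub_self]))
    have b2 : Function.Bijective (G.comp G') := by
      refine ps.bijective_of_arrow_diff hQ _ (fun i => by
        rw [AlgHom.comp_apply, hG'e, hGe]) (fun i j a => ?_)
      exact hIle ((hker _).1 (by rw [map_sub, hcomp2, sub_self]))
    have bG : Function.Bijective G := by
      constructor
      · have := b1.injective
        rw [AlgHom.coe_comp] at this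
        exact Function.Injective.of_comp this
      · have := b2.surjective
        rw [AlgHom.coe_comp] at this
        exact Function.Surjective.of_comp this
    refine ⟨AlgEquiv.ofBijective G bG, hGe, ?_, hGp⟩
    refine PathAlgStructure.map_eq_self _ (fun x => ?_)
    rw [← hker, ← hker]
    show p (G x) = 0 ↔ p x = 0
    rw [hGp x]
    constructor
    · intro hh
      have := h.injective (by rw [hh, map_zero] : h (p x) = h 0)
      exact this
    · intro hh
      rw [hh, map_zero]
  · -- (2) kernel characterization
    intro g hge _hmap
    constructor
    · intro hgp i j a
      exact (hker _).1 (by rw [map_sub, hgp, sub_self])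
    · intro harr x
      exact ps.algHom_ext (f₁ := p.comp (g : A →ₐ[k] A)) (f₂ := p)
        (fun i => by
          show p (g (ps.idem i)) = p (ps.idem i)
          rw [hge i])
        (fun i j a => by
          have := (hker _).2 (harr i j a)
          rw [map_sub, sub_eq_zero] at this
          exact this) x
  · -- (3a)
    intro g hge _hmap hgp q v
    obtain ⟨⟨i, j⟩, hne⟩ := q
    have hIpart : g (v : A) - (v : A) ∈ I :=
      (hker _).1 (by rw [map_sub, hgp, sub_self])
    have hx : (v : A) ∈ ps.pathSpan i j := ps.arrowSpan_le_pathSpan i j v.2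
    have h1 : ps.idem i * (v : A) = v := ps.idem_mul_of_mem_pathSpan hx
    have h2 : (v : A) * ps.idem j = v := ps.mul_idem_of_mem_pathSpan hx
    have hv : ps.idem i * (v : A) * ps.idem j = (v : A) := by rw [h1, h2]
    have h4 : g (v : A) = ps.idem i * g (v : A) * ps.idem j := by
      conv_lhs => rw [← hv]
      rw [map_mul, map_mul, hge, hge]
    have key : g (v : A) - (v : A) = ps.idem i * (g (v : A) - (v : A)) * ps.idem j := by
      rw [mul_sub, sub_mul, ← h4, hv]
    refine Submodule.mem_inf.2 ⟨hIpart, ?_⟩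
    rw [key]
    exact ps.idem_mul_mul_idem_mem_pathSpan i j _
  · -- (3b)
    intro φ
    set F : ∀ i j : V, Q.Arrow i j → A := fun i j a =>
      ps.basis ⟨i, j, (QPath.nil i).cons a⟩ +
        (φ ⟨(j, i), FinQuiver.arrow_ne hQ a⟩
          ⟨ps.basis ⟨i, j, (QPath.nil i).cons a⟩, Submodule.subset_span ⟨a, rfl⟩⟩ : A)
      with hFdef
    have hwI : ∀ (i j : V) (a : Q.Arrow i j),
        ((φ ⟨(j, i), FinQuiver.arrow_ne hQ a⟩
          ⟨ps.basis ⟨i, j, (QPath.nil i).cons a⟩, Submodule.subset_span ⟨a, rfl⟩⟩ : A)) ∈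
          I ⊓ ps.pathSpan j i := fun i j a =>
      (φ ⟨(j, i), FinQuiver.arrow_ne hQ a⟩
        ⟨ps.basis ⟨i, j, (QPath.nil i).cons a⟩, Submodule.subset_span ⟨a, rfl⟩⟩).2
    have hF : ps.IsBlock F := by
      intro i j a
      have hw := (Submodule.mem_inf.1 (hwI i j a)).2
      constructor
      · rw [hFdef]
        dsimp only
        rw [mul_add, ps.idem_mul_basis_same, ps.idem_mul_of_mem_pathSpan hw]
      · rw [hFdef]
        dsimp only
        rw [add_mul, ps.basis_mul_idem_same, ps.mul_idem_of_mem_pathSpan hw]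
    have bG : Function.Bijective (ps.liftHom F hF) := by
      refine ps.bijective_of_arrow_diff hQ _ (ps.liftHom_idem hF) (fun i j a => ?_)
      rw [ps.liftHom_arrow hF a, hFdef]
      dsimp only
      rw [add_sub_cancel_left]
      exact hIle (Submodule.mem_inf.1 (hwI i j a)).1
    set g : A ≃ₐ[k] A := AlgEquiv.ofBijective (ps.liftHom F hF) bG with hgdef
    have hgapp : ∀ x : A, g x = ps.liftHom F hF x := fun x => rfl
    have hge : ∀ i : V, g (ps.idem i) = ps.idem i := ps.liftHom_idem hF
    have hgp : ∀ x : A, p (g x) = p x := by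
      intro x
      rw [hgapp x]
      refine ps.algHom_ext (f₁ := p.comp (ps.liftHom F hF)) (f₂ := p)
        (fun i => by
          show p (ps.liftHom F hF (ps.idem i)) = p (ps.idem i)
          rw [ps.liftHom_idem hF]) (fun i j a => ?_) x
      show p (ps.liftHom F hF _) = p _
      rw [ps.liftHom_arrow hF a, hFdef]
      dsimp only
      rw [map_add, (hker _).2 (Submodule.mem_inf.1 (hwI i j a)).1, add_zero]
    have hmap : Submodule.map g.toLinearMap I = I := by
      refine PathAlgStructure.map_eq_self _ (fun x => ?_)
      rw [← hker, ← hker]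
      show p (g x) = 0 ↔ p x = 0
      rw [hgp x]
    have hcond : ∀ (q : {q : V × V // q.1 ≠ q.2}) (v : ps.arrowSpan q.1.1 q.1.2),
        g (v : A) - (v : A) = (φ q v : A) := by
      rintro ⟨⟨i₀, j₀⟩, hne⟩ v
      obtain ⟨x, hx⟩ := v
      show g x - x = (φ ⟨(i₀, j₀), hne⟩ ⟨x, hx⟩ : A)
      induction hx using Submodule.span_induction with
      | mem y hy =>
        obtain ⟨a, rfl⟩ := hy
        rw [hgapp, ps.liftHom_arrow hF a, hFdef]
        dsimp only
        rw [add_sub_cancel_left]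
      | zero =>
        rw [map_zero, sub_zero]
        have : (⟨(0 : A), Submodule.zero_mem _⟩ : ps.arrowSpan i₀ j₀) = 0 := rfl
        rw [this, map_zero]
        rfl
      | add y z hy hz ihy ihz =>
        have e1 : (⟨y + z, Submodule.add_mem _ hy hz⟩ : ps.arrowSpan i₀ j₀) =
            ⟨y, hy⟩ + ⟨z, hz⟩ := rfl
        have e2 : g (y + z) - (y + z) = (g y - y) + (g z - z) := by rw [map_add]; abel
        rw [e2, ihy, ihz]
        rw [show (⟨y + z, _⟩ : ps.arrowSpan i₀ j₀) = ⟨y, hy⟩ + ⟨z, hz⟩ from rfl, map_add]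
        rfl
      | smul c y hy ihy =>
        have e2 : g (c • y) - c • y = c • (g y - y) := by rw [map_smul, smul_sub]
        rw [e2, ihy]
        rw [show (⟨c • y, _⟩ : ps.arrowSpan i₀ j₀) = c • ⟨y, hy⟩ from rfl, map_smul]
        rfl
    refine ⟨g, ⟨hge, hmap, hgp, hcond⟩, ?_⟩
    intro g' ⟨h1, _h2, _h3, h4⟩
    refine AlgEquiv.ext (fun x => ?_)
    refine ps.algHom_ext (f₁ := (g' : A →ₐ[k] A)) (f₂ := (g : A →ₐ[k] A))
      (fun i => by
        show g' (ps.idem i) = g (ps.idem i)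
        rw [h1 i, hge i]) (fun i j a => ?_) x
    have hv := h4 ⟨(j, i), FinQuiver.arrow_ne hQ a⟩
      ⟨ps.basis ⟨i, j, (QPath.nil i).cons a⟩, Submodule.subset_span ⟨a, rfl⟩⟩
    have hv' : g (ps.basis ⟨i, j, (QPath.nil i).cons a⟩) - ps.basis ⟨i, j, (QPath.nil i).cons a⟩
        = _ := hcond ⟨(j, i), FinQuiver.arrow_ne hQ a⟩
      ⟨ps.basis ⟨i, j, (QPath.nil i).cons a⟩, Submodule.subset_span ⟨a, rfl⟩⟩
    show g' _ = g _
    exact sub_left_inj.1 (hv.trans hv'.symm)
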